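/- Let τ_M be the M×M Hankel determinant of x-derivatives of f, i.e. τ_M(x,y) = det(A) where A is the M×M matrix with (a,b)-entry (0 ≤ a,b ≤ M−1) equal to ∂^{a+b} f/∂x^{a+b}(x,y) = Σ_{i=1}^N (−k_i)^{a+b} exp(θ_i(x,y)). Then for every 1 ≤ M ≤ N and all (x,y), τ_M(x,y) = Σ_{1 ≤ i_1 < i_2 < ⋯ < i_M ≤ N} Δ(i_1,…,i_M) · exp(θ_{i_1}(x,y) + ⋯ + θ_{i_M}(x,y)), where Δ(i_1,…,i_M) = Π_{1 ≤ j < l ≤ M} (k_{i_j} − k_{i_l})². -/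

import Mathlib

section HankelAux

open Finset Matrix Equiv

/-- Enumeration of a finset of naturals (proof-free version of `orderEmbOfFin`). -/
def enumFS (M : ℕ) (S : Finset ℕ) (a : Fin M) : ℕ := (S.sort (· ≤ ·)).getD a 0

lemma enumFS_eq {M : ℕ} {S : Finset ℕ} (h : S.card = M) (a : Fin M) :
    enumFS M S a = S.orderEmbOfFin h a := by
  rw [Finset.orderEmbOfFin_apply, enumFS,
    List.getD_eq_getElem _ _ (by rw [Finset.length_sort, h]; exact a.2)]
  rfl

lemma image_enumFS {M : ℕ} {S : Finset ℕ} (h : S.card = M) (σ : Equiv.Perm (Fin M)) :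
    Finset.image (fun a => enumFS M S (σ a)) Finset.univ = S := by
  ext j
  simp only [Finset.mem_image, Finset.mem_univ, true_and]
  constructor
  · rintro ⟨a, rfl⟩
    rw [enumFS_eq h]
    exact Finset.orderEmbOfFin_mem S h _
  · intro hj
    have : j ∈ Set.range (S.orderEmbOfFin h) := by
      rw [Finset.range_orderEmbOfFin]; exact hj
    obtain ⟨a, ha⟩ := this
    exact ⟨σ.symm a, by rw [enumFS_eq h, σ.apply_symm_apply, ha]⟩

/-- Grouping a sum over tuples (vanishing on non-injective ones) by image and permutation. -/
lemma sum_piFinset_group (T : Finset ℕ) (M : ℕ) (F : (Fin M → ℕ) → ℝ)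
    (hF : ∀ r, ¬ Function.Injective r → F r = 0) :
    ∑ r ∈ Fintype.piFinset (fun _ : Fin M => T), F r
      = ∑ S ∈ T.powersetCard M, ∑ σ : Equiv.Perm (Fin M), F (fun a => enumFS M S (σ a)) := by
  classical
  rw [← Finset.sum_filter_add_sum_filter_not (Fintype.piFinset fun _ : Fin M => T)
      (fun r => Function.Injective r)]
  rw [Finset.sum_eq_zero (fun r hr => hF r (Finset.mem_filter.mp hr).2), add_zero]
  rw [Finset.sum_sigma']
  refine (Finset.sum_bij (fun p _ => fun a => enumFS M p.1 (p.2 a)) ?_ ?_ ?_ ?_).symm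
  · rintro ⟨S, σ⟩ hp
    obtain ⟨hsub, hcard⟩ := Finset.mem_powersetCard.mp (Finset.mem_sigma.mp hp).1
    refine Finset.mem_filter.mpr ⟨Fintype.mem_piFinset.mpr fun a => ?_, ?_⟩
    · show enumFS M S (σ a) ∈ T
      rw [enumFS_eq hcard]; exact hsub (Finset.orderEmbOfFin_mem S hcard _)
    · intro a b hab
      simp only at hab
      simp only [enumFS_eq hcard] at hab
      exact σ.injective ((S.orderEmbOfFin hcard).injective hab)
  · rintro ⟨S, σ⟩ hp ⟨S', σ'⟩ hp' heq
    obtain ⟨hsub, hcard⟩ := Finset.mem_powersetCard.mp (Finset.mem_sigma.mp hp).1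
    obtain ⟨hsub', hcard'⟩ := Finset.mem_powersetCard.mp (Finset.mem_sigma.mp hp').1
    simp only at heq hsub hcard hsub' hcard'
    have hSS : S = S' := by
      rw [← image_enumFS hcard σ, ← image_enumFS hcard' σ', heq]
    subst hSS
    have hσ : σ = σ' := Equiv.ext fun a => by
      have := congrFun heq a
      simp only [enumFS_eq hcard] at this
      exact (S.orderEmbOfFin hcard).injective this
    rw [hσ]
  · intro r hr
    obtain ⟨hmem, hinj⟩ := Finset.mem_filter.mp hr
    have hmem' := Fintype.mem_piFinset.mp hmem
    set S : Finset ℕ := Finset.image r Finset.univ with hSdef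
    have hS : S.card = M := by
      rw [hSdef, Finset.card_image_of_injective _ hinj, Finset.card_univ, Fintype.card_fin]
    have hg : Function.Injective
        (fun a => (S.orderIsoOfFin hS).symm ⟨r a, by simp [hSdef]⟩ : Fin M → Fin M) := by
      intro a b hab
      have := (S.orderIsoOfFin hS).symm.injective hab
      exact hinj (Subtype.ext_iff.mp this)
    obtain ⟨σ, hσ⟩ : ∃ σ : Equiv.Perm (Fin M),
        ∀ a, σ a = (S.orderIsoOfFin hS).symm ⟨r a, by simp [hSdef]⟩ :=
      ⟨Equiv.ofBijective _ ((Finite.injective_iff_bijective).1 hg), fun a => rfl⟩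
    refine ⟨⟨S, σ⟩, Finset.mem_sigma.mpr ⟨Finset.mem_powersetCard.mpr
      ⟨fun j hj => ?_, hS⟩, Finset.mem_univ _⟩, ?_⟩
    · obtain ⟨a, _, rfl⟩ := Finset.mem_image.mp hj
      exact hmem' a
    · funext a
      show enumFS M S (σ a) = r a
      rw [enumFS_eq hS, hσ a]
      have : (S.orderIsoOfFin hS) ((S.orderIsoOfFin hS).symm ⟨r a, by simp [hSdef]⟩)
          = ⟨r a, by simp [hSdef]⟩ := (S.orderIsoOfFin hS).apply_symm_apply _
      rw [← Finset.coe_orderIsoOfFin_apply, this]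
  · rintro ⟨S, σ⟩ hp
    rfl

/-- Determinant of the "column Vandermonde" matrix. -/
lemma key_det {M : ℕ} (u : Fin M → ℝ) :
    Matrix.det (Matrix.of fun a b : Fin M => u b ^ (a : ℕ))
      = ∏ a : Fin M, ∏ b ∈ Finset.Ioi a, (u b - u a) := by
  rw [show (Matrix.of fun a b : Fin M => u b ^ (a : ℕ)) = (Matrix.vandermonde u)ᵀ from rfl,
    Matrix.det_transpose, Matrix.det_vandermonde]

/-- Multilinear expansion of the Hankel-type determinant. -/
lemma det_expand (M : ℕ) (v c : ℕ → ℝ) (T : Finset ℕ) :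
    Matrix.det (Matrix.of fun a b : Fin M =>
        ∑ i ∈ T, v i ^ ((a : ℕ) + (b : ℕ)) * c i)
      = ∑ r ∈ Fintype.piFinset (fun _ : Fin M => T),
          (∏ a : Fin M, (v (r a) ^ (a : ℕ) * c (r a))) *
          (∏ a : Fin M, ∏ b ∈ Finset.Ioi a, (v (r b) - v (r a))) := by
  classical
  rw [Matrix.det_apply']
  have h1 : ∀ σ : Equiv.Perm (Fin M),
      (∏ b : Fin M, (Matrix.of fun a b : Fin M =>
          ∑ i ∈ T, v i ^ ((a : ℕ) + (b : ℕ)) * c i) (σ b) b)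
      = ∑ r ∈ Fintype.piFinset (fun _ : Fin M => T),
          ∏ b : Fin M, v (r b) ^ (((σ b) : ℕ) + (b : ℕ)) * c (r b) := by
    intro σ
    simp only [Matrix.of_apply]
    rw [Finset.prod_univ_sum]
  simp_rw [h1, Finset.mul_sum]
  rw [Finset.sum_comm]
  refine Finset.sum_congr rfl fun r hr => ?_
  have h2 : ∀ σ : Equiv.Perm (Fin M),
      (∏ b : Fin M, v (r b) ^ (((σ b) : ℕ) + (b : ℕ)) * c (r b))
      = (∏ a : Fin M, (v (r a) ^ (a : ℕ) * c (r a))) * ∏ b : Fin M, v (r b) ^ ((σ b : ℕ)) := by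
    intro σ
    rw [← Finset.prod_mul_distrib]
    refine Finset.prod_congr rfl fun b _ => ?_
    rw [pow_add]
    ring
  simp_rw [h2, mul_left_comm]
  rw [← Finset.mul_sum]
  congr 1
  rw [← key_det (fun b => v (r b)), Matrix.det_apply']
  simp only [Matrix.of_apply]

/-- The summand vanishes on non-injective tuples. -/
lemma vanish (M : ℕ) (v c : ℕ → ℝ) (r : Fin M → ℕ) (hrinj : ¬ Function.Injective r) :
    (∏ a : Fin M, (v (r a) ^ (a : ℕ) * c (r a))) *
      (∏ a : Fin M, ∏ b ∈ Finset.Ioi a, (v (r b) - v (r a))) = 0 := by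
  classical
  rw [Function.Injective] at hrinj
  push_neg at hrinj
  obtain ⟨a, b, hab, hne⟩ := hrinj
  have key : ∀ (a b : Fin M), a < b → r a = r b →
      (∏ a : Fin M, ∏ b ∈ Finset.Ioi a, (v (r b) - v (r a))) = 0 := by
    intro a b hlt he
    apply Finset.prod_eq_zero (Finset.mem_univ a)
    apply Finset.prod_eq_zero (Finset.mem_Ioi.mpr hlt)
    rw [he, sub_self]
  rcases hne.lt_or_gt with h | h
  · rw [key a b h hab, mul_zero]
  · rw [key b a h hab.symm, mul_zero]

/-- The sum over permutations for a fixed subset `S`. -/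
lemma perS (M : ℕ) (k c : ℕ → ℝ) (S : Finset ℕ) (hcard : S.card = M) :
    (∑ σ : Equiv.Perm (Fin M),
      (∏ a : Fin M, ((fun i => -(k i)) (S.orderEmbOfFin hcard (σ a)) ^ (a : ℕ)
          * c (S.orderEmbOfFin hcard (σ a)))) *
      (∏ a : Fin M, ∏ b ∈ Finset.Ioi a,
        ((fun i => -(k i)) (S.orderEmbOfFin hcard (σ b))
          - (fun i => -(k i)) (S.orderEmbOfFin hcard (σ a)))))
    = (∏ j ∈ S, ∏ l ∈ S.filter (fun l => j < l), (k j - k l) ^ 2) * ∏ i ∈ S, c i := by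
  classical
  set v : ℕ → ℝ := fun i => -(k i) with hv
  set s : Fin M → ℕ := fun a => S.orderEmbOfFin hcard a with hs
  have hsmono : StrictMono s := (S.orderEmbOfFin hcard).strictMono
  have hperm : ∀ σ : Equiv.Perm (Fin M),
      (∏ a : Fin M, ∏ b ∈ Finset.Ioi a, (v (s (σ b)) - v (s (σ a))))
      = ((Equiv.Perm.sign σ : ℤ) : ℝ) *
          ∏ a : Fin M, ∏ b ∈ Finset.Ioi a, (v (s b) - v (s a)) := by
    intro σ
    rw [← key_det (fun b => v (s (σ b))), ← key_det (fun b => v (s b))]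
    rw [show (Matrix.of fun a b : Fin M => v (s (σ b)) ^ (a : ℕ))
        = (Matrix.of fun a b : Fin M => v (s b) ^ (a : ℕ)).submatrix id σ from rfl]
    rw [Matrix.det_permute']
  have hsplit : ∀ σ : Equiv.Perm (Fin M),
      (∏ a : Fin M, (v (s (σ a)) ^ (a : ℕ) * c (s (σ a))))
      = (∏ a : Fin M, c (s a)) * ∏ a : Fin M, v (s (σ a)) ^ (a : ℕ) := by
    intro σ
    rw [Finset.prod_mul_distrib, Equiv.prod_comp σ (fun a => c (s a)), mul_comm]
  calc
    (∑ σ : Equiv.Perm (Fin M),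
        (∏ a : Fin M, (v (s (σ a)) ^ (a : ℕ) * c (s (σ a)))) *
        (∏ a : Fin M, ∏ b ∈ Finset.Ioi a, (v (s (σ b)) - v (s (σ a)))))
      = (∏ a : Fin M, c (s a)) *
          ((∏ a : Fin M, ∏ b ∈ Finset.Ioi a, (v (s b) - v (s a))) *
            ∑ σ : Equiv.Perm (Fin M),
              ((Equiv.Perm.sign σ : ℤ) : ℝ) * ∏ a : Fin M, v (s (σ a)) ^ (a : ℕ)) := by
        simp_rw [hperm, hsplit, Finset.mul_sum]
        refine Finset.sum_congr rfl fun σ _ => ?_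
        ring
    _ = (∏ a : Fin M, c (s a)) *
          ((∏ a : Fin M, ∏ b ∈ Finset.Ioi a, (v (s b) - v (s a))) *
           (∏ a : Fin M, ∏ b ∈ Finset.Ioi a, (v (s b) - v (s a)))) := by
        congr 2
        rw [show (∑ σ : Equiv.Perm (Fin M),
            ((Equiv.Perm.sign σ : ℤ) : ℝ) * ∏ a : Fin M, v (s (σ a)) ^ (a : ℕ))
          = Matrix.det (Matrix.of fun a b : Fin M => v (s a) ^ (b : ℕ)) from by
            rw [Matrix.det_apply']; simp only [Matrix.of_apply]]
        rw [show (Matrix.of fun a b : Fin M => v (s a) ^ (b : ℕ))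
            = Matrix.vandermonde (fun a => v (s a)) from rfl, Matrix.det_vandermonde]
    _ = (∏ j ∈ S, ∏ l ∈ S.filter (fun l => j < l), (k j - k l) ^ 2) * ∏ i ∈ S, c i := by
        have hvk : ∀ a b : Fin M, (v (s b) - v (s a)) * (v (s b) - v (s a))
            = (k (s a) - k (s b)) ^ 2 := by
          intro a b; simp only [hv]; ring
        have h1 : (∏ a : Fin M, ∏ b ∈ Finset.Ioi a, (k (s a) - k (s b)) ^ 2)
            = ∏ j ∈ S, ∏ l ∈ S.filter (fun l => j < l), (k j - k l) ^ 2 := by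
          rw [Finset.prod_sigma', Finset.prod_sigma']
          refine Finset.prod_bij (fun p _ => ⟨s p.1, s p.2⟩) ?_ ?_ ?_ ?_
          · rintro ⟨a, b⟩ hp
            have hb := (Finset.mem_sigma.mp hp).2
            exact Finset.mem_sigma.mpr ⟨Finset.orderEmbOfFin_mem S hcard _,
              Finset.mem_filter.mpr ⟨Finset.orderEmbOfFin_mem S hcard _,
                hsmono (Finset.mem_Ioi.mp hb)⟩⟩
          · rintro ⟨a, b⟩ _ ⟨a', b'⟩ _ h
            obtain ⟨h1, h2⟩ := Sigma.mk.inj_iff.mp h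
            have e1 : a = a' := hsmono.injective h1
            have e2 : b = b' := hsmono.injective (eq_of_heq h2)
            subst e1; subst e2; rfl
          · rintro ⟨j, l⟩ hp
            obtain ⟨hj, hl⟩ := Finset.mem_sigma.mp hp
            obtain ⟨hlS, hjl⟩ := Finset.mem_filter.mp hl
            obtain ⟨a, ha⟩ : ∃ a, s a = j := by
              have : j ∈ Set.range (S.orderEmbOfFin hcard) := by
                rw [Finset.range_orderEmbOfFin]; exact hj
              exact this
            obtain ⟨b, hb⟩ : ∃ b, s b = l := by
              have : l ∈ Set.range (S.orderEmbOfFin hcard) := by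
                rw [Finset.range_orderEmbOfFin]; exact hlS
              exact this
            refine ⟨⟨a, b⟩, Finset.mem_sigma.mpr ⟨Finset.mem_univ _,
              Finset.mem_Ioi.mpr (hsmono.lt_iff_lt.mp ?_)⟩, ?_⟩
            · rw [ha, hb]; exact hjl
            · simp only [ha, hb]
          · rintro ⟨a, b⟩ _; rfl
        have h2 : (∏ a : Fin M, c (s a)) = ∏ i ∈ S, c i := by
          refine Finset.prod_bij (fun a _ => s a) ?_ ?_ ?_ ?_
          · intro a _; exact Finset.orderEmbOfFin_mem S hcard _
          · intro a _ a' _ h; exact hsmono.injective h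
          · intro j hj
            have : j ∈ Set.range (S.orderEmbOfFin hcard) := by
              rw [Finset.range_orderEmbOfFin]; exact hj
            obtain ⟨a, ha⟩ := this
            exact ⟨a, Finset.mem_univ _, ha⟩
          · intro a _; rfl
        have hDD : (∏ a : Fin M, ∏ b ∈ Finset.Ioi a, (v (s b) - v (s a))) *
            (∏ a : Fin M, ∏ b ∈ Finset.Ioi a, (v (s b) - v (s a)))
            = ∏ a : Fin M, ∏ b ∈ Finset.Ioi a, (k (s a) - k (s b)) ^ 2 := by
          rw [← Finset.prod_mul_distrib]
          refine Finset.prod_congr rfl fun a _ => ?_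
          rw [← Finset.prod_mul_distrib]
          exact Finset.prod_congr rfl fun b _ => hvk a b
        rw [hDD, h1, h2, mul_comm]

end HankelAux

/-- The Hankel determinant τ_M of x-derivatives of
`f(x,y) = Σ_{i=1}^N exp(θ_i(x,y))`, `θ_i(x,y) = -k_i x + k_i² y + θ_i⁰`,
equals the sum over M-element subsets {i₁<⋯<i_M} of {1,…,N} of
`Δ(i₁,…,i_M) exp(θ_{i₁}+⋯+θ_{i_M})`, where Δ is the squared Vandermonde. -/
theorem hankel_tau_sum_over_subsets
    (N : ℕ) (hN : 1 ≤ N)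
    (k θ0 : ℕ → ℝ)
    (θ : ℕ → ℝ → ℝ → ℝ)
    (hθ : ∀ i x y, θ i x y = -(k i) * x + (k i) ^ 2 * y + θ0 i)
    (M : ℕ) (hM1 : 1 ≤ M) (hMN : M ≤ N) (x y : ℝ) :
    Matrix.det (Matrix.of fun a b : Fin M =>
        ∑ i ∈ Finset.Icc 1 N, (-(k i)) ^ ((a : ℕ) + (b : ℕ)) * Real.exp (θ i x y))
      = ∑ S ∈ Finset.powersetCard M (Finset.Icc 1 N),
          (∏ j ∈ S, ∏ l ∈ S.filter (fun l => j < l), (k j - k l) ^ 2)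
            * Real.exp (∑ i ∈ S, θ i x y) := by
  classical
  rw [det_expand M (fun i => -(k i)) (fun i => Real.exp (θ i x y)) (Finset.Icc 1 N)]
  rw [sum_piFinset_group (Finset.Icc 1 N) M _
    (fun r hr => vanish M (fun i => -(k i)) (fun i => Real.exp (θ i x y)) r hr)]
  refine Finset.sum_congr rfl fun S hS => ?_
  obtain ⟨hsub, hcard⟩ := Finset.mem_powersetCard.mp hS
  simp only [enumFS_eq hcard]
  rw [perS M k (fun i => Real.exp (θ i x y)) S hcard]
  rw [Real.exp_sum]
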